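/- Let S, Z, X, Y, Z' be discrete random variables such that (S,Z) ↔ X ↔ (Y,Z') is a Markov chain and X ↔ Y ↔ Z' is a Markov chain. Then I(S; Z,Y) − I(S; Z,Z') ≤ I(S,Z; Y) − I(S,Z; Z'). -/

import Mathlib

open Finset

structure FinProb (Ω : Type) [Fintype Ω] where
  p : Ω → ℝ
  nonneg : ∀ ω, 0 ≤ p ω
  sum_one : ∑ ω, p ω = 1

namespace FinProb

variable {Ω : Type} [Fintype Ω] (μ : FinProb Ω)

/-- P(X = x) -/
noncomputable def prob {α : Type} [DecidableEq α] (X : Ω → α) (x : α) : ℝ :=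
  ∑ ω, if X ω = x then μ.p ω else 0

/-- Shannon entropy (base 2) of a random variable. -/
noncomputable def H {α : Type} [Fintype α] [DecidableEq α] (X : Ω → α) : ℝ :=
  -∑ x, μ.prob X x * Real.logb 2 (μ.prob X x)

/-- Mutual information I(X;Y). -/
noncomputable def I {α β : Type} [Fintype α] [DecidableEq α] [Fintype β] [DecidableEq β]
    (X : Ω → α) (Y : Ω → β) : ℝ :=
  μ.H X + μ.H Y - μ.H (fun ω => (X ω, Y ω))

/-- Conditional entropy H(X|Z). -/
noncomputable def condH {α γ : Type} [Fintype α] [DecidableEq α] [Fintype γ] [DecidableEq γ]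
    (X : Ω → α) (Z : Ω → γ) : ℝ :=
  μ.H (fun ω => (X ω, Z ω)) - μ.H Z

/-- Conditional mutual information I(X;Y|Z). -/
noncomputable def condI {α β γ : Type} [Fintype α] [DecidableEq α] [Fintype β] [DecidableEq β]
    [Fintype γ] [DecidableEq γ] (X : Ω → α) (Y : Ω → β) (Z : Ω → γ) : ℝ :=
  μ.condH X Z + μ.condH Y Z - μ.condH (fun ω => (X ω, Y ω)) Z

/-- X and Y are conditionally independent given Z. -/
def CondIndep {α β γ : Type} [DecidableEq α] [DecidableEq β] [DecidableEq γ]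
    (X : Ω → α) (Y : Ω → β) (Z : Ω → γ) : Prop :=
  ∀ x y z, μ.prob (fun ω => (X ω, Y ω, Z ω)) (x, y, z) * μ.prob Z z
    = μ.prob (fun ω => (X ω, Z ω)) (x, z) * μ.prob (fun ω => (Y ω, Z ω)) (y, z)

/-- X and Y are independent. -/
def Indep {α β : Type} [DecidableEq α] [DecidableEq β] (X : Ω → α) (Y : Ω → β) : Prop :=
  ∀ x y, μ.prob (fun ω => (X ω, Y ω)) (x, y) = μ.prob X x * μ.prob Y y

end FinProb

/-- Binary entropy function (base 2). -/
noncomputable def binEnt (x : ℝ) : ℝ := -x * Real.logb 2 x - (1 - x) * Real.logb 2 (1 - x)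


set_option linter.unusedSectionVars false

lemma term_ineq (p pab pac pb pc pcb : ℝ) (hp : 0 ≤ p) (hpab : p ≤ pab) (hpac : p ≤ pac)
    (hpb : p ≤ pb) (hpcb : p ≤ pcb) (hacc : pac ≤ pc) (hcb0 : 0 ≤ pcb)
    (hci : p * pb = pab * pcb) :
    (p - (if 0 < pc then pac * pcb / pc else 0)) / Real.log 2
      ≤ p * (Real.logb 2 pab + Real.logb 2 pc - Real.logb 2 pb - Real.logb 2 pac) := by
  have hlog2 : 0 < Real.log 2 := Real.log_pos (by norm_num)
  rcases eq_or_lt_of_le hp with h0 | h0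
  · -- p = 0
    have hp0 : p = 0 := h0.symm
    subst hp0
    have hg : 0 ≤ (if (0:ℝ) < pc then pac * pcb / pc else 0) := by
      split
      · exact div_nonneg (mul_nonneg hpac hcb0) (by linarith)
      · exact le_rfl
    calc (0 - (if (0:ℝ) < pc then pac * pcb / pc else 0)) / Real.log 2
        ≤ 0 := div_nonpos_of_nonpos_of_nonneg (by linarith) (le_of_lt hlog2)
      _ = 0 * (Real.logb 2 pab + Real.logb 2 pc - Real.logb 2 pb - Real.logb 2 pac) := by ring
  · -- p > 0
    have hpab' : 0 < pab := lt_of_lt_of_le h0 hpab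
    have hpac' : 0 < pac := lt_of_lt_of_le h0 hpac
    have hpb' : 0 < pb := lt_of_lt_of_le h0 hpb
    have hpcb' : 0 < pcb := lt_of_lt_of_le h0 hpcb
    have hpc' : 0 < pc := lt_of_lt_of_le hpac' hacc
    rw [if_pos hpc']
    have hlogpab : Real.log pab = Real.log p + Real.log pb - Real.log pcb := by
      have : pab = p * pb / pcb := by field_simp; linarith [hci]
      rw [this, Real.log_div (by positivity) (ne_of_gt hpcb'), Real.log_mul (ne_of_gt h0) (ne_of_gt hpb')]
    set t : ℝ := pac * pcb / (p * pc) with ht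
    have ht0 : 0 < t := by positivity
    have hlt : Real.log t ≤ t - 1 := Real.log_le_sub_one_of_pos ht0
    have hlogt : Real.log t = Real.log pac + Real.log pcb - Real.log p - Real.log pc := by
      rw [ht, Real.log_div (by positivity) (by positivity), Real.log_mul (ne_of_gt hpac') (ne_of_gt hpcb'), Real.log_mul (ne_of_gt h0) (ne_of_gt hpc')]
      ring
    have hpt : p * t = pac * pcb / pc := by
      field_simp [ht]
      rw [ht]; field_simp
    have key : p - pac * pcb / pc ≤ p * (Real.log pab + Real.log pc - Real.log pb - Real.log pac) := by
      have h1 : Real.log pab + Real.log pc - Real.log pb - Real.log pac = -(Real.log t) := by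
        rw [hlogpab, hlogt]; ring
      rw [h1]
      have h2 : p * (1 - t) ≤ p * (-(Real.log t)) := by
        apply mul_le_mul_of_nonneg_left _ hp
        linarith
      calc p - pac * pcb / pc = p * (1 - t) := by rw [mul_sub, hpt]; ring
        _ ≤ _ := h2
    -- convert logb to log/log2
    simp only [Real.logb]
    rw [div_le_iff₀ hlog2]
    calc p - pac * pcb / pc ≤ p * (Real.log pab + Real.log pc - Real.log pb - Real.log pac) := key
      _ = p * (Real.log pab / Real.log 2 + Real.log pc / Real.log 2 - Real.log pb / Real.log 2 - Real.log pac / Real.log 2) * Real.log 2 := by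
        field_simp


namespace FinProb
variable {Ω : Type} [Fintype Ω] (μ : FinProb Ω)

section helpers
variable {α β γ : Type} [DecidableEq α] [DecidableEq β] [DecidableEq γ]

lemma prob_nonneg (T : Ω → α) (t : α) : 0 ≤ μ.prob T t :=
  Finset.sum_nonneg fun ω _ => by split; exacts [μ.nonneg ω, le_rfl]

lemma prob_iff {T : Ω → α} {T' : Ω → β} {t : α} {t' : β}
    (h : ∀ ω, T ω = t ↔ T' ω = t') : μ.prob T t = μ.prob T' t' :=
  Finset.sum_congr rfl fun ω _ => if_congr (h ω) rfl rfl

lemma sum_prob [Fintype α] (T : Ω → α) : ∑ t, μ.prob T t = 1 := by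
  unfold prob
  rw [Finset.sum_comm, ← μ.sum_one]
  refine Finset.sum_congr rfl fun ω _ => ?_
  simp

lemma marg_fst [Fintype α] (U : Ω → α) (W : Ω → β) (w : β) :
    ∑ a, μ.prob (fun ω => (U ω, W ω)) (a, w) = μ.prob W w := by
  unfold prob
  rw [Finset.sum_comm]
  refine Finset.sum_congr rfl fun ω _ => ?_
  simp [Prod.ext_iff, ite_and]

lemma marg_snd [Fintype β] (U : Ω → α) (W : Ω → β) (u : α) :
    ∑ b, μ.prob (fun ω => (U ω, W ω)) (u, b) = μ.prob U u := by
  unfold prob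
  rw [Finset.sum_comm]
  refine Finset.sum_congr rfl fun ω _ => ?_
  simp [Prod.ext_iff, ite_and]

lemma prob_le_fst [Fintype α] (U : Ω → α) (W : Ω → β) (a : α) (w : β) :
    μ.prob (fun ω => (U ω, W ω)) (a, w) ≤ μ.prob W w := by
  rw [← μ.marg_fst U W w]
  exact Finset.single_le_sum (fun a' (_ : a' ∈ univ) => μ.prob_nonneg (fun ω => (U ω, W ω)) (a', w)) (mem_univ a)

lemma prob_le_snd [Fintype β] (U : Ω → α) (W : Ω → β) (u : α) (b : β) :
    μ.prob (fun ω => (U ω, W ω)) (u, b) ≤ μ.prob U u := by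
  rw [← μ.marg_snd U W u]
  exact Finset.single_le_sum (fun b' (_ : b' ∈ univ) => μ.prob_nonneg (fun ω => (U ω, W ω)) (u, b')) (mem_univ b)


lemma prob_comp_eq [Fintype α] {f : α → β} (hf : Function.Injective f) (X : Ω → α) (a : α) :
    μ.prob (fun ω => f (X ω)) (f a) = μ.prob X a :=
  Finset.sum_congr rfl fun ω _ => if_congr (by simp [hf.eq_iff]) rfl rfl

lemma H_comp [Fintype α] [Fintype β] {f : α → β} (hf : Function.Injective f) (X : Ω → α) :
    μ.H (fun ω => f (X ω)) = μ.H X := by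
  unfold H
  congr 1
  have hz : ∀ b ∈ univ, b ∉ univ.image f →
      μ.prob (fun ω => f (X ω)) b * Real.logb 2 (μ.prob (fun ω => f (X ω)) b) = 0 := by
    intro b _ hb
    have : μ.prob (fun ω => f (X ω)) b = 0 := by
      apply Finset.sum_eq_zero
      intro ω _
      rw [if_neg]
      intro h
      exact hb (Finset.mem_image.2 ⟨X ω, mem_univ _, h⟩)
    rw [this]; ring
  calc ∑ b : β, μ.prob (fun ω => f (X ω)) b * Real.logb 2 (μ.prob (fun ω => f (X ω)) b)
      = ∑ b ∈ univ.image f, μ.prob (fun ω => f (X ω)) b * Real.logb 2 (μ.prob (fun ω => f (X ω)) b) :=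
        (Finset.sum_subset (Finset.subset_univ _) hz).symm
    _ = ∑ a : α, μ.prob (fun ω => f (X ω)) (f a) * Real.logb 2 (μ.prob (fun ω => f (X ω)) (f a)) :=
        Finset.sum_image (fun a _ b _ h => hf h)
    _ = ∑ a : α, μ.prob X a * Real.logb 2 (μ.prob X a) := by
        refine Finset.sum_congr rfl fun a _ => ?_
        rw [μ.prob_comp_eq hf]

end helpers
end FinProb

namespace FinProb
variable {Ω : Type} [Fintype Ω] (μ : FinProb Ω)

section key
variable {α β γ : Type} [Fintype α] [DecidableEq α] [Fintype β] [DecidableEq β]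
  [Fintype γ] [DecidableEq γ] (A : Ω → α) (B : Ω → β) (C : Ω → γ)

lemma m_ab (a : α) (b : β) :
    ∑ c, μ.prob (fun ω => (A ω, B ω, C ω)) (a, b, c) = μ.prob (fun ω => (A ω, B ω)) (a, b) := by
  rw [← μ.marg_snd (fun ω => (A ω, B ω)) C (a, b)]
  refine Finset.sum_congr rfl fun c _ => ?_
  refine μ.prob_iff fun ω => ?_
  simp only [Prod.ext_iff]
  tauto

lemma m_ac (a : α) (c : γ) :
    ∑ b, μ.prob (fun ω => (A ω, B ω, C ω)) (a, b, c) = μ.prob (fun ω => (A ω, C ω)) (a, c) := by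
  rw [← μ.marg_fst B (fun ω => (A ω, C ω)) (a, c)]
  refine Finset.sum_congr rfl fun b _ => ?_
  refine μ.prob_iff fun ω => ?_
  simp only [Prod.ext_iff]
  tauto

lemma m_cb (b : β) (c : γ) :
    ∑ a, μ.prob (fun ω => (A ω, B ω, C ω)) (a, b, c) = μ.prob (fun ω => (C ω, B ω)) (c, b) := by
  rw [← μ.marg_fst A (fun ω => (C ω, B ω)) (c, b)]
  refine Finset.sum_congr rfl fun a _ => ?_
  refine μ.prob_iff fun ω => ?_
  simp only [Prod.ext_iff]
  tauto

lemma I_expand :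
    μ.I A B - μ.I A C = ∑ a, ∑ b, ∑ c, μ.prob (fun ω => (A ω, B ω, C ω)) (a, b, c) *
      (Real.logb 2 (μ.prob (fun ω => (A ω, B ω)) (a, b)) + Real.logb 2 (μ.prob C c)
       - Real.logb 2 (μ.prob B b) - Real.logb 2 (μ.prob (fun ω => (A ω, C ω)) (a, c))) := by
  have hHB : μ.H B = -∑ a, ∑ b, ∑ c, μ.prob (fun ω => (A ω, B ω, C ω)) (a, b, c) * Real.logb 2 (μ.prob B b) := by
    unfold H
    rw [Finset.sum_comm]
    congr 1
    refine Finset.sum_congr rfl fun b _ => ?_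
    rw [← μ.marg_fst A B b, Finset.sum_mul]
    refine Finset.sum_congr rfl fun a _ => ?_
    rw [← μ.m_ab A B C a b, Finset.sum_mul]
  have hHC : μ.H C = -∑ a, ∑ b, ∑ c, μ.prob (fun ω => (A ω, B ω, C ω)) (a, b, c) * Real.logb 2 (μ.prob C c) := by
    unfold H
    have : ∀ c, μ.prob C c * Real.logb 2 (μ.prob C c)
        = ∑ a, ∑ b, μ.prob (fun ω => (A ω, B ω, C ω)) (a, b, c) * Real.logb 2 (μ.prob C c) := by
      intro c
      rw [← μ.marg_fst A C c, Finset.sum_mul]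
      refine Finset.sum_congr rfl fun a _ => ?_
      rw [← μ.m_ac A B C a c, Finset.sum_mul]
    simp only [this]
    congr 1
    rw [Finset.sum_comm]
    refine Finset.sum_congr rfl fun a _ => ?_
    rw [Finset.sum_comm]
  have hHAB : μ.H (fun ω => (A ω, B ω)) = -∑ a, ∑ b, ∑ c, μ.prob (fun ω => (A ω, B ω, C ω)) (a, b, c) * Real.logb 2 (μ.prob (fun ω => (A ω, B ω)) (a, b)) := by
    unfold H
    rw [Fintype.sum_prod_type]
    congr 1
    refine Finset.sum_congr rfl fun a _ => Finset.sum_congr rfl fun b _ => ?_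
    rw [← μ.m_ab A B C a b, Finset.sum_mul]
  have hHAC : μ.H (fun ω => (A ω, C ω)) = -∑ a, ∑ b, ∑ c, μ.prob (fun ω => (A ω, B ω, C ω)) (a, b, c) * Real.logb 2 (μ.prob (fun ω => (A ω, C ω)) (a, c)) := by
    unfold H
    rw [Fintype.sum_prod_type]
    congr 1
    refine Finset.sum_congr rfl fun a _ => ?_
    rw [Finset.sum_comm]
    refine Finset.sum_congr rfl fun c _ => ?_
    rw [← μ.m_ac A B C a c, Finset.sum_mul]
  have expand : μ.I A B - μ.I A C
      = μ.H B - μ.H C - μ.H (fun ω => (A ω, B ω)) + μ.H (fun ω => (A ω, C ω)) := by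
    unfold I; ring
  rw [expand, hHB, hHC, hHAB, hHAC]
  simp only [mul_add, mul_sub, Finset.sum_add_distrib, Finset.sum_sub_distrib]
  ring

lemma key (h : μ.CondIndep A C B) : μ.I A C ≤ μ.I A B := by
  rw [← sub_nonneg, I_expand]
  set P : α → β → γ → ℝ := fun a b c => μ.prob (fun ω => (A ω, B ω, C ω)) (a, b, c) with hP
  set g : α → β → γ → ℝ := fun a b c =>
    if 0 < μ.prob C c then μ.prob (fun ω => (A ω, C ω)) (a, c) * μ.prob (fun ω => (C ω, B ω)) (c, b) / μ.prob C c else 0 with hg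
  have hpoint : ∀ a b c, (P a b c - g a b c) / Real.log 2
      ≤ P a b c * (Real.logb 2 (μ.prob (fun ω => (A ω, B ω)) (a, b)) + Real.logb 2 (μ.prob C c)
       - Real.logb 2 (μ.prob B b) - Real.logb 2 (μ.prob (fun ω => (A ω, C ω)) (a, c))) := by
    intro a b c
    apply term_ineq
    · exact μ.prob_nonneg _ _
    · rw [← μ.m_ab A B C a b]
      exact Finset.single_le_sum (fun c' (_ : c' ∈ Finset.univ) => μ.prob_nonneg (fun ω => (A ω, B ω, C ω)) (a, b, c')) (mem_univ c)
    · rw [← μ.m_ac A B C a c]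
      exact Finset.single_le_sum (fun b' (_ : b' ∈ Finset.univ) => μ.prob_nonneg (fun ω => (A ω, B ω, C ω)) (a, b', c)) (mem_univ b)
    · exact le_trans (by
        rw [← μ.m_ab A B C a b]
        exact Finset.single_le_sum (fun c' (_ : c' ∈ Finset.univ) => μ.prob_nonneg (fun ω => (A ω, B ω, C ω)) (a, b, c')) (mem_univ c))
        (μ.prob_le_fst A B a b)
    · rw [← μ.m_cb A B C b c]
      exact Finset.single_le_sum (fun a' (_ : a' ∈ Finset.univ) => μ.prob_nonneg (fun ω => (A ω, B ω, C ω)) (a', b, c)) (mem_univ a)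
    · exact μ.prob_le_fst A C a c
    · exact μ.prob_nonneg _ _
    · have hh := h a c b
      have hre : μ.prob (fun ω => (A ω, C ω, B ω)) (a, c, b) = P a b c := by
        refine μ.prob_iff fun ω => ?_
        simp only [Prod.ext_iff]
        tauto
      rw [hre] at hh
      exact hh
  have hsumP : ∑ a, ∑ b, ∑ c, P a b c = 1 := by
    have : ∀ a, ∑ b, ∑ c, P a b c = μ.prob A a := by
      intro a
      have : ∀ b, ∑ c, P a b c = μ.prob (fun ω => (A ω, B ω)) (a, b) := fun b => μ.m_ab A B C a b
      simp only [this]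
      exact μ.marg_snd A B a
    simp only [this]
    exact μ.sum_prob A
  have hsumg : ∑ a, ∑ b, ∑ c, g a b c ≤ 1 := by
    have hre : ∑ a, ∑ b, ∑ c, g a b c = ∑ c, ∑ a, ∑ b, g a b c := by
      have h1 : ∀ a : α, ∑ b, ∑ c, g a b c = ∑ c, ∑ b, g a b c := fun a => Finset.sum_comm
      simp only [h1]
      exact Finset.sum_comm
    rw [hre]
    have hc : ∀ c, ∑ a, ∑ b, g a b c ≤ μ.prob C c := by
      intro c
      by_cases hc0 : 0 < μ.prob C c
      · have heq : ∑ a, ∑ b, g a b c = μ.prob C c := by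
          simp only [hg, if_pos hc0]
          have hb : ∀ a, ∑ b, μ.prob (fun ω => (A ω, C ω)) (a, c) * μ.prob (fun ω => (C ω, B ω)) (c, b) / μ.prob C c
              = μ.prob (fun ω => (A ω, C ω)) (a, c) := by
            intro a
            rw [← Finset.sum_div, ← Finset.mul_sum, μ.marg_snd C B c]
            field_simp
          simp only [hb]
          exact μ.marg_fst A C c
        rw [heq]
      · have hz : ∀ a b, g a b c = 0 := fun a b => if_neg hc0
        simp only [hz, Finset.sum_const_zero]
        exact μ.prob_nonneg C c
    calc ∑ c, ∑ a, ∑ b, g a b c ≤ ∑ c, μ.prob C c := Finset.sum_le_sum fun c _ => hc c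
      _ = 1 := μ.sum_prob C
  have hlog2 : 0 < Real.log 2 := Real.log_pos (by norm_num)
  have hstep : ∑ a, ∑ b, ∑ c, (P a b c - g a b c) / Real.log 2
      ≤ ∑ a, ∑ b, ∑ c, P a b c *
      (Real.logb 2 (μ.prob (fun ω => (A ω, B ω)) (a, b)) + Real.logb 2 (μ.prob C c)
       - Real.logb 2 (μ.prob B b) - Real.logb 2 (μ.prob (fun ω => (A ω, C ω)) (a, c))) :=
    Finset.sum_le_sum fun a _ => Finset.sum_le_sum fun b _ => Finset.sum_le_sum fun c _ => hpoint a b c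
  have heq : ∑ a, ∑ b, ∑ c, (P a b c - g a b c) / Real.log 2
      = ((∑ a, ∑ b, ∑ c, P a b c) - ∑ a, ∑ b, ∑ c, g a b c) / Real.log 2 := by
    simp only [Finset.sum_sub_distrib, ← Finset.sum_div]
  refine le_trans ?_ hstep
  rw [heq, hsumP]
  apply div_nonneg _ (le_of_lt hlog2)
  linarith

end key
end FinProb


theorem stmt10 {Ω S Z X Y Z' : Type} [Fintype Ω]
    [Fintype S] [DecidableEq S] [Fintype Z] [DecidableEq Z]
    [Fintype X] [DecidableEq X] [Fintype Y] [DecidableEq Y]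
    [Fintype Z'] [DecidableEq Z']
    (μ : FinProb Ω) (s : Ω → S) (z : Ω → Z) (x : Ω → X) (y : Ω → Y) (z' : Ω → Z')
    (h1 : μ.CondIndep (fun ω => (s ω, z ω)) (fun ω => (y ω, z' ω)) x)
    (h2 : μ.CondIndep x z' y) :
    μ.I s (fun ω => (z ω, y ω)) - μ.I s (fun ω => (z ω, z' ω))
      ≤ μ.I (fun ω => (s ω, z ω)) y - μ.I (fun ω => (s ω, z ω)) z' := by
  -- Step 1: marginalize s out of h1
  have h1' : ∀ (a : Z) (c : Y) (b : Z') (r : X),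
      μ.prob (fun ω => (z ω, y ω, z' ω, x ω)) (a, c, b, r) * μ.prob x r
        = μ.prob (fun ω => (z ω, x ω)) (a, r) * μ.prob (fun ω => (y ω, z' ω, x ω)) (c, b, r) := by
    intro a c b r
    have hL : ∑ p₁, μ.prob (fun ω => ((s ω, z ω), (y ω, z' ω), x ω)) ((p₁, a), (c, b), r)
        = μ.prob (fun ω => (z ω, y ω, z' ω, x ω)) (a, c, b, r) := by
      rw [← μ.marg_fst s (fun ω => (z ω, y ω, z' ω, x ω)) (a, c, b, r)]
      refine Finset.sum_congr rfl fun p₁ _ => μ.prob_iff fun ω => ?_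
      simp only [Prod.ext_iff]; tauto
    have hR : ∑ p₁, μ.prob (fun ω => ((s ω, z ω), x ω)) ((p₁, a), r)
        = μ.prob (fun ω => (z ω, x ω)) (a, r) := by
      rw [← μ.marg_fst s (fun ω => (z ω, x ω)) (a, r)]
      refine Finset.sum_congr rfl fun p₁ _ => μ.prob_iff fun ω => ?_
      simp only [Prod.ext_iff]; tauto
    have hyzx : μ.prob (fun ω => ((y ω, z' ω), x ω)) ((c, b), r)
        = μ.prob (fun ω => (y ω, z' ω, x ω)) (c, b, r) :=
      μ.prob_iff fun ω => by simp only [Prod.ext_iff]; tauto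
    calc μ.prob (fun ω => (z ω, y ω, z' ω, x ω)) (a, c, b, r) * μ.prob x r
        = (∑ p₁, μ.prob (fun ω => ((s ω, z ω), (y ω, z' ω), x ω)) ((p₁, a), (c, b), r)) * μ.prob x r := by rw [hL]
      _ = ∑ p₁, μ.prob (fun ω => ((s ω, z ω), (y ω, z' ω), x ω)) ((p₁, a), (c, b), r) * μ.prob x r := Finset.sum_mul _ _ _
      _ = ∑ p₁, μ.prob (fun ω => ((s ω, z ω), x ω)) ((p₁, a), r) * μ.prob (fun ω => ((y ω, z' ω), x ω)) ((c, b), r) :=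
          Finset.sum_congr rfl fun p₁ _ => h1 (p₁, a) (c, b) r
      _ = (∑ p₁, μ.prob (fun ω => ((s ω, z ω), x ω)) ((p₁, a), r)) * μ.prob (fun ω => ((y ω, z' ω), x ω)) ((c, b), r) :=
          (Finset.sum_mul _ _ _).symm
      _ = μ.prob (fun ω => (z ω, x ω)) (a, r) * μ.prob (fun ω => (y ω, z' ω, x ω)) (c, b, r) := by rw [hR, hyzx]
  -- Step 2: marginalize z' out of h1'
  have h1'' : ∀ (a : Z) (c : Y) (r : X),
      μ.prob (fun ω => (z ω, y ω, x ω)) (a, c, r) * μ.prob x r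
        = μ.prob (fun ω => (z ω, x ω)) (a, r) * μ.prob (fun ω => (y ω, x ω)) (c, r) := by
    intro a c r
    have hL : ∑ b, μ.prob (fun ω => (z ω, y ω, z' ω, x ω)) (a, c, b, r)
        = μ.prob (fun ω => (z ω, y ω, x ω)) (a, c, r) := by
      rw [← μ.marg_fst z' (fun ω => (z ω, y ω, x ω)) (a, c, r)]
      refine Finset.sum_congr rfl fun b _ => μ.prob_iff fun ω => ?_
      simp only [Prod.ext_iff]; tauto
    have hR : ∑ b, μ.prob (fun ω => (y ω, z' ω, x ω)) (c, b, r)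
        = μ.prob (fun ω => (y ω, x ω)) (c, r) := by
      rw [← μ.marg_fst z' (fun ω => (y ω, x ω)) (c, r)]
      refine Finset.sum_congr rfl fun b _ => μ.prob_iff fun ω => ?_
      simp only [Prod.ext_iff]; tauto
    calc μ.prob (fun ω => (z ω, y ω, x ω)) (a, c, r) * μ.prob x r
        = (∑ b, μ.prob (fun ω => (z ω, y ω, z' ω, x ω)) (a, c, b, r)) * μ.prob x r := by rw [hL]
      _ = ∑ b, μ.prob (fun ω => (z ω, y ω, z' ω, x ω)) (a, c, b, r) * μ.prob x r := Finset.sum_mul _ _ _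
      _ = ∑ b, μ.prob (fun ω => (z ω, x ω)) (a, r) * μ.prob (fun ω => (y ω, z' ω, x ω)) (c, b, r) :=
          Finset.sum_congr rfl fun b _ => h1' a c b r
      _ = μ.prob (fun ω => (z ω, x ω)) (a, r) * ∑ b, μ.prob (fun ω => (y ω, z' ω, x ω)) (c, b, r) :=
          (Finset.mul_sum _ _ _).symm
      _ = _ := by rw [hR]
  -- Step 3: the per-x identity
  have hper : ∀ (a : Z) (c : Y) (b : Z') (r : X),
      μ.prob (fun ω => (z ω, y ω, z' ω, x ω)) (a, c, b, r) * μ.prob y c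
        = μ.prob (fun ω => (z ω, y ω, x ω)) (a, c, r) * μ.prob (fun ω => (z' ω, y ω)) (b, c) := by
    intro a c b r
    by_cases hxr : μ.prob x r = 0
    · have hJ : μ.prob (fun ω => (z ω, y ω, z' ω, x ω)) (a, c, b, r) = 0 := by
        have hle : μ.prob (fun ω => ((z ω, y ω, z' ω), x ω)) ((a, c, b), r) ≤ μ.prob x r :=
          μ.prob_le_fst (fun ω => (z ω, y ω, z' ω)) x (a, c, b) r
        have hre : μ.prob (fun ω => ((z ω, y ω, z' ω), x ω)) ((a, c, b), r)
            = μ.prob (fun ω => (z ω, y ω, z' ω, x ω)) (a, c, b, r) :=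
          μ.prob_iff fun ω => by simp only [Prod.ext_iff]; tauto
        have := μ.prob_nonneg (fun ω => (z ω, y ω, z' ω, x ω)) (a, c, b, r)
        rw [hre] at hle; rw [hxr] at hle; linarith
      have hK : μ.prob (fun ω => (z ω, y ω, x ω)) (a, c, r) = 0 := by
        have hle : μ.prob (fun ω => ((z ω, y ω), x ω)) ((a, c), r) ≤ μ.prob x r :=
          μ.prob_le_fst (fun ω => (z ω, y ω)) x (a, c) r
        have hre : μ.prob (fun ω => ((z ω, y ω), x ω)) ((a, c), r)
            = μ.prob (fun ω => (z ω, y ω, x ω)) (a, c, r) :=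
          μ.prob_iff fun ω => by simp only [Prod.ext_iff]; tauto
        have := μ.prob_nonneg (fun ω => (z ω, y ω, x ω)) (a, c, r)
        rw [hre] at hle; rw [hxr] at hle; linarith
      rw [hJ, hK]; ring
    · refine mul_left_cancel₀ hxr ?_
      have e1 := h1' a c b r
      have e3 := h1'' a c r
      have e2 := h2 r b c
      have hre1 : μ.prob (fun ω => (y ω, z' ω, x ω)) (c, b, r)
          = μ.prob (fun ω => (x ω, z' ω, y ω)) (r, b, c) :=
        μ.prob_iff fun ω => by simp only [Prod.ext_iff]; tauto
      have hre2 : μ.prob (fun ω => (y ω, x ω)) (c, r) = μ.prob (fun ω => (x ω, y ω)) (r, c) :=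
        μ.prob_iff fun ω => by simp only [Prod.ext_iff]; tauto
      rw [hre1] at e1
      rw [hre2] at e3
      linear_combination μ.prob y c * e1 + μ.prob (fun ω => (z ω, x ω)) (a, r) * e2
        - μ.prob (fun ω => (z' ω, y ω)) (b, c) * e3
  -- Step 4: sum over r to get the Markov chain z ↔ y ↔ z'
  have markov : μ.CondIndep z z' y := by
    intro a b c
    have expand1 : μ.prob (fun ω => (z ω, z' ω, y ω)) (a, b, c)
        = ∑ r, μ.prob (fun ω => (z ω, y ω, z' ω, x ω)) (a, c, b, r) := by
      rw [← μ.marg_snd (fun ω => (z ω, z' ω, y ω)) x (a, b, c)]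
      refine Finset.sum_congr rfl fun r _ => (μ.prob_iff fun ω => ?_).symm
      simp only [Prod.ext_iff]; tauto
    have expand2 : μ.prob (fun ω => (z ω, y ω)) (a, c)
        = ∑ r, μ.prob (fun ω => (z ω, y ω, x ω)) (a, c, r) := by
      rw [← μ.marg_snd (fun ω => (z ω, y ω)) x (a, c)]
      refine Finset.sum_congr rfl fun r _ => (μ.prob_iff fun ω => ?_).symm
      simp only [Prod.ext_iff]; tauto
    calc μ.prob (fun ω => (z ω, z' ω, y ω)) (a, b, c) * μ.prob y c
        = (∑ r, μ.prob (fun ω => (z ω, y ω, z' ω, x ω)) (a, c, b, r)) * μ.prob y c := by rw [expand1]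
      _ = ∑ r, μ.prob (fun ω => (z ω, y ω, z' ω, x ω)) (a, c, b, r) * μ.prob y c := Finset.sum_mul _ _ _
      _ = ∑ r, μ.prob (fun ω => (z ω, y ω, x ω)) (a, c, r) * μ.prob (fun ω => (z' ω, y ω)) (b, c) :=
          Finset.sum_congr rfl fun r _ => hper a c b r
      _ = (∑ r, μ.prob (fun ω => (z ω, y ω, x ω)) (a, c, r)) * μ.prob (fun ω => (z' ω, y ω)) (b, c) :=
          (Finset.sum_mul _ _ _).symm
      _ = μ.prob (fun ω => (z ω, y ω)) (a, c) * μ.prob (fun ω => (z' ω, y ω)) (b, c) := by rw [expand2]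
  -- Step 5: data processing via the key lemma
  have hkey : μ.I z z' ≤ μ.I z y := μ.key z y z' markov
  -- Step 6: relabel entropies and conclude
  have hf1 : Function.Injective (fun p : S × Z × Y => ((p.1, p.2.1), p.2.2)) := by
    intro p q h; simp only [Prod.mk.injEq] at h
    exact Prod.ext h.1.1 (Prod.ext h.1.2 h.2)
  have hf2 : Function.Injective (fun p : S × Z × Z' => ((p.1, p.2.1), p.2.2)) := by
    intro p q h; simp only [Prod.mk.injEq] at h
    exact Prod.ext h.1.1 (Prod.ext h.1.2 h.2)
  have e1 : μ.H (fun ω => ((s ω, z ω), y ω)) = μ.H (fun ω => (s ω, z ω, y ω)) :=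
    μ.H_comp hf1 (fun ω => (s ω, z ω, y ω))
  have e2 : μ.H (fun ω => ((s ω, z ω), z' ω)) = μ.H (fun ω => (s ω, z ω, z' ω)) :=
    μ.H_comp hf2 (fun ω => (s ω, z ω, z' ω))
  simp only [FinProb.I] at hkey ⊢
  linarith [e1, e2, hkey]
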